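/- Under the formula p_i(γ, I^p_m) = (1/h_{m,i}) · (γ_i/(γ_i+1)) · (I^p_m + N_m) / (1 − Σ_{j∈M_m} γ_j/(γ_j+1)) with Σ_{j∈M_m} γ_j/(γ_j+1) < 1, the constraint 0 ≤ p_i(γ, I^p_m) ≤ p_i^max for all i ∈ M_m holds if and only if 0 ≤ I^p_m ≤ Ī^p_m, where Ī^p_m = min_{i∈M_m} (p_i^max h_{m,i} (γ_i+1)/γ_i) · (1 − Σ_{j∈M_m} γ_j/(γ_j+1)) − N_m. In particular, the feasible total interference region is a closed box (interval in each coordinate). -/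

import Mathlib

/-- Under the power formula of Lemma 1, the power constraints
`0 ≤ p_i ≤ p_i^max` for all in-cell users hold iff `0 ≤ Ip ≤ Ī^p_m`, where
`Ī^p_m` is the total interference temperature limit: the feasible total
interference region is a closed interval (box in each coordinate). -/
theorem stmt4 (M : ℕ) (Mm : Finset (Fin M)) (hMm : Mm.Nonempty)
    (hgain pmax γ : Fin M → ℝ) (Nm : ℝ)
    (hpos : ∀ i, 0 < hgain i) (hpmax : ∀ i, 0 < pmax i) (hNm : 0 < Nm)
    (hγ : ∀ i ∈ Mm, 0 < γ i)
    (hsum : (∑ j ∈ Mm, γ j / (γ j + 1)) < 1)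
    (Ibar : ℝ)
    (hIbar : Ibar = Mm.inf' hMm (fun i => pmax i * hgain i * (γ i + 1) / γ i)
      * (1 - ∑ j ∈ Mm, γ j / (γ j + 1)) - Nm)
    (hIbar0 : 0 ≤ Ibar)
    (pfun : ℝ → Fin M → ℝ)
    (hpfun : ∀ Ip i, pfun Ip i = (1 / hgain i) * (γ i / (γ i + 1)) *
      ((Ip + Nm) / (1 - ∑ j ∈ Mm, γ j / (γ j + 1)))) :
    ∀ Ip : ℝ, 0 ≤ Ip →
      (Ip ≤ Ibar ↔ ∀ i ∈ Mm, 0 ≤ pfun Ip i ∧ pfun Ip i ≤ pmax i) := by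
  intro Ip hIp
  set S := ∑ j ∈ Mm, γ j / (γ j + 1) with hS
  have hD : 0 < 1 - S := by linarith
  have hIN : 0 < Ip + Nm := by linarith
  have key : ∀ i ∈ Mm, (pfun Ip i ≤ pmax i ↔
      (Ip + Nm) / (1 - S) ≤ pmax i * hgain i * (γ i + 1) / γ i) := by
    intro i hi
    have hγi := hγ i hi
    have hγ1 : (0 : ℝ) < γ i + 1 := by linarith
    have hh := hpos i
    rw [hpfun, show (1 / hgain i) * (γ i / (γ i + 1)) * ((Ip + Nm) / (1 - S))
        = (Ip + Nm) / (1 - S) / (hgain i * (γ i + 1) / γ i) by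
      field_simp]
    rw [div_le_iff₀ (by positivity : (0:ℝ) < hgain i * (γ i + 1) / γ i),
      show pmax i * (hgain i * (γ i + 1) / γ i)
        = pmax i * hgain i * (γ i + 1) / γ i from by ring]
  have hmain : Ip ≤ Ibar ↔ ∀ i ∈ Mm,
      (Ip + Nm) / (1 - S) ≤ pmax i * hgain i * (γ i + 1) / γ i := by
    rw [hIbar]
    constructor
    · intro h i hi
      have h1 : (Ip + Nm) / (1 - S)
          ≤ Mm.inf' hMm (fun i => pmax i * hgain i * (γ i + 1) / γ i) := by
        rw [div_le_iff₀ hD]; linarith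
      exact h1.trans (Finset.inf'_le _ hi)
    · intro h
      have h1 : (Ip + Nm) / (1 - S)
          ≤ Mm.inf' hMm (fun i => pmax i * hgain i * (γ i + 1) / γ i) :=
        Finset.le_inf' hMm _ h
      rw [div_le_iff₀ hD] at h1; linarith
  rw [hmain]
  constructor
  · intro h i hi
    refine ⟨?_, (key i hi).2 (h i hi)⟩
    rw [hpfun]
    have hγi := hγ i hi
    have hγ1 : (0:ℝ) < γ i + 1 := by linarith
    have hh := hpos i
    exact mul_nonneg (mul_nonneg (by positivity) (by positivity))
      (div_nonneg hIN.le hD.le)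
  · intro h i hi
    exact (key i hi).1 (h i hi).2
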